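/- Let f, g : ℝ → ℂ be nonzero Schwartz functions and let 1 ≤ s < p ≤ 2. Define G_t(ξ, η) = ĝ(η) t^{-1/p'} f̂(t^{-1}(ξ - η)) for t > 0. Then the mixed norm ‖G_t‖_{L^{p'}_ξ L^{s'}_η} (taking the L^{s'} norm in η first, then the L^{p'} norm in ξ) tends to infinity as t → 0⁺. -/

import Mathlib

open MeasureTheory Real ENNReal Filter Topology
noncomputable section

/-- Fourier transform on ℝ. -/
def FT1R (f : ℝ → ℂ) (ξ : ℝ) : ℂ :=
  ∫ x : ℝ, Complex.exp (((-2 * π * (x * ξ)) : ℝ) * Complex.I) * f x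

/-- Fourier transform on ℝ². -/
def FT2R (F : ℝ × ℝ → ℂ) (ξ η : ℝ) : ℂ :=
  ∫ z : ℝ × ℝ, Complex.exp (((-2 * π * (z.1 * ξ + z.2 * η)) : ℝ) * Complex.I) * F z

/-- L^p norm of an ℝ≥0∞-valued function. -/
def lpNormENN {α : Type*} [MeasureSpace α] (p : ℝ≥0∞) (f : α → ℝ≥0∞) : ℝ≥0∞ :=
  if p = ∞ then essSup f volume else (∫⁻ x, f x ^ p.toReal) ^ (1 / p.toReal)

/-- Mixed norm: inner L^s norm in the second variable, outer L^p norm in the first. -/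
def mixedNorm {α β : Type*} [MeasureSpace α] [MeasureSpace β]
    (p s : ℝ≥0∞) (F : α × β → ℂ) : ℝ≥0∞ :=
  lpNormENN p (fun x => eLpNorm (fun y => F (x, y)) s volume)

lemma FT1R_eq_fourierIntegral (f : ℝ → ℂ) : FT1R f = FourierTransform.fourier f := by
  funext ξ
  rw [Real.fourier_real_eq_integral_exp_smul]
  simp only [FT1R, smul_eq_mul]
  congr 1
  funext v
  norm_num [mul_assoc]

/-- For a nonzero Schwartz function, the Fourier transform is bounded below near a point. -/
lemma exists_lower_bound (f : SchwartzMap ℝ ℂ) (hf : f ≠ 0) :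
    ∃ x₀ c δ : ℝ, 0 < c ∧ 0 < δ ∧ ∀ x : ℝ, |x - x₀| ≤ δ → c ≤ ‖FT1R (⇑f) x‖ := by
  set F := FourierTransform.fourierCLE ℂ (SchwartzMap ℝ ℂ) f with hF
  have hFT : FT1R (⇑f) = ⇑F := by
    rw [FT1R_eq_fourierIntegral]
    exact (SchwartzMap.fourier_coe f).symm
  have hne : F ≠ 0 := by
    intro h
    apply hf
    have := (FourierTransform.fourierCLE ℂ (SchwartzMap ℝ ℂ)).injective (a₁ := f) (a₂ := 0)
    simp only [map_zero] at this
    exact this h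
  obtain ⟨x₀, hx₀⟩ : ∃ x₀, F x₀ ≠ 0 := by
    by_contra h
    push_neg at h
    exact hne (SchwartzMap.ext fun x => by simpa using h x)
  have hFpos : 0 < ‖F x₀‖ := norm_pos_iff.mpr hx₀
  have hcpos : 0 < ‖F x₀‖ / 2 := by positivity
  have hcont : ContinuousAt (⇑F) x₀ := F.continuous.continuousAt
  obtain ⟨δ₁, hδ₁, hball⟩ := Metric.continuousAt_iff.mp hcont (‖F x₀‖ / 2) hcpos
  refine ⟨x₀, ‖F x₀‖ / 2, δ₁ / 2, hcpos, by positivity, fun x hx => ?_⟩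
  have hd : dist x x₀ < δ₁ := by
    rw [Real.dist_eq]
    linarith [hx]
  have h2 := hball hd
  rw [dist_eq_norm] at h2
  have h3 : ‖F x₀‖ - ‖F x‖ ≤ ‖F x - F x₀‖ := by
    have := norm_sub_norm_le (F x₀) (F x)
    rw [norm_sub_rev] at this
    linarith
  rw [hFT]
  linarith

set_option maxHeartbeats 1000000 in
theorem mixedNorm_blowup (f g : SchwartzMap ℝ ℂ) (hf : f ≠ 0) (hg : g ≠ 0)
    (p s p' s' : ℝ≥0∞) (hs : 1 ≤ s) (hsp : s < p) (hp2 : p ≤ 2)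
    (hpconj : 1 / p + 1 / p' = 1) (hsconj : 1 / s + 1 / s' = 1) :
    Tendsto
      (fun t : ℝ =>
        mixedNorm p' s'
          (fun z : ℝ × ℝ =>
            FT1R (fun y => g y) z.2 * ((t ^ (-(1 / p'.toReal)) : ℝ) : ℂ) *
              FT1R (fun x => f x) (t⁻¹ * (z.1 - z.2))))
      (𝓝[>] (0 : ℝ)) (𝓝 (∞ : ℝ≥0∞)) := by
  obtain ⟨η₀, c, δ, hc, hδ, hψ⟩ := exists_lower_bound g hg
  obtain ⟨u₀, c', δ', hc', hδ', hφ⟩ := exists_lower_bound f hf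
  -- exponent arithmetic
  have hp1 : 1 < p := lt_of_le_of_lt hs hsp
  have hp'ne0 : p' ≠ 0 := by
    rintro rfl
    simp [ENNReal.div_zero] at hpconj
  have hs'ne0 : s' ≠ 0 := by
    rintro rfl
    simp [ENNReal.div_zero] at hsconj
  have hp'top : p' ≠ ∞ := by
    rintro rfl
    rw [ENNReal.div_top, add_zero, one_div, ENNReal.inv_eq_one] at hpconj
    exact hp1.ne' hpconj
  have h1s : 1 / p < 1 / s := by
    rw [one_div, one_div]
    exact ENNReal.inv_lt_inv.mpr hsp
  have h1stop : 1 / s' ≠ ∞ := by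
    rw [one_div, Ne, ENNReal.inv_eq_top]
    exact hs'ne0
  have hs'p' : 1 / s' < 1 / p' := by
    by_contra hcon
    push_neg at hcon
    have : (1 : ℝ≥0∞) < 1 := by
      calc (1 : ℝ≥0∞) = 1 / p + 1 / p' := hpconj.symm
        _ ≤ 1 / p + 1 / s' := add_le_add_right hcon _
        _ < 1 / s + 1 / s' := ENNReal.add_lt_add_right h1stop h1s
        _ = 1 := hsconj
    exact lt_irrefl _ this
  set α : ℝ := 1 / p'.toReal with hα_def
  set β : ℝ := 1 / s'.toReal with hβ_def
  have hpr : 0 < p'.toReal := ENNReal.toReal_pos hp'ne0 hp'top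
  have hα : 0 < α := by positivity
  have hβ0 : 0 ≤ β := by positivity
  have hβα : β < α := by
    rcases eq_or_ne s' ∞ with h | h
    · simpa [hβ_def, h] using hα
    · have hlt : p' < s' := by rwa [one_div, one_div, ENNReal.inv_lt_inv] at hs'p'
      have h2 : p'.toReal < s'.toReal := (ENNReal.toReal_lt_toReal hp'top h).mpr hlt
      exact one_div_lt_one_div_of_lt hpr h2
  set ψ : ℝ → ℂ := FT1R (⇑g) with hψ_def
  set φ : ℝ → ℂ := FT1R (⇑f) with hφ_def
  -- lower bound function
  set L : ℝ → ℝ≥0∞ := fun t =>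
    ENNReal.ofReal (c * c' * t ^ (-α)) * ENNReal.ofReal (2 * (t * δ')) ^ β *
      ENNReal.ofReal δ ^ α with hL_def
  set K : ℝ≥0∞ := ENNReal.ofReal (c * c') * ENNReal.ofReal (2 * δ') ^ β *
      ENNReal.ofReal δ ^ α with hK_def
  have hKne0 : K ≠ 0 := by
    rw [hK_def]
    have h1 : (0 : ℝ≥0∞) < ENNReal.ofReal (c * c') := by
      rw [ENNReal.ofReal_pos]; positivity
    have h2 : (0 : ℝ≥0∞) < ENNReal.ofReal (2 * δ') ^ β :=
      ENNReal.rpow_pos (by rw [ENNReal.ofReal_pos]; positivity) ENNReal.ofReal_ne_top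
    have h3 : (0 : ℝ≥0∞) < ENNReal.ofReal δ ^ α :=
      ENNReal.rpow_pos (by rw [ENNReal.ofReal_pos]; positivity) ENNReal.ofReal_ne_top
    exact mul_ne_zero (mul_ne_zero h1.ne' h2.ne') h3.ne'
  have hLkey : ∀ t : ℝ, 0 < t → L t = K * ENNReal.ofReal t ^ (β - α) := by
    intro t ht
    have htne : ENNReal.ofReal t ≠ 0 := by
      rw [Ne, ENNReal.ofReal_eq_zero]; linarith
    simp only [hL_def, hK_def]
    have e1 : ENNReal.ofReal (c * c' * t ^ (-α)) =
        ENNReal.ofReal (c * c') * ENNReal.ofReal t ^ (-α) := by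
      rw [ENNReal.ofReal_mul (by positivity), ENNReal.ofReal_rpow_of_pos ht]
    have e2 : ENNReal.ofReal (2 * (t * δ')) =
        ENNReal.ofReal (2 * δ') * ENNReal.ofReal t := by
      rw [← ENNReal.ofReal_mul (by positivity)]
      ring_nf
    have e3 : ENNReal.ofReal t ^ (β - α) = ENNReal.ofReal t ^ β * ENNReal.ofReal t ^ (-α) := by
      rw [sub_eq_add_neg, ENNReal.rpow_add _ _ htne ENNReal.ofReal_ne_top]
    rw [e1, e2, ENNReal.mul_rpow_of_nonneg _ _ hβ0, e3]
    ring
  have hLtop : Tendsto L (𝓝[>] (0 : ℝ)) (𝓝 ∞) := by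
    have hbase : Tendsto (fun t : ℝ => ENNReal.ofReal t) (𝓝[>] (0 : ℝ)) (𝓝 0) := by
      simpa using (ENNReal.continuous_ofReal.tendsto 0).mono_left
        (nhdsWithin_le_nhds (s := Set.Ioi (0:ℝ)))
    have hpow : Tendsto (fun t : ℝ => ENNReal.ofReal t ^ (β - α)) (𝓝[>] (0 : ℝ)) (𝓝 ∞) := by
      have := hbase.ennrpow_const (β - α)
      rwa [ENNReal.zero_rpow_of_neg (by linarith)] at this
    have := ENNReal.Tendsto.const_mul (a := K) hpow (Or.inl (by simp))
    rw [ENNReal.mul_top hKne0] at this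
    apply this.congr'
    filter_upwards [self_mem_nhdsWithin] with t ht
    exact (hLkey t ht).symm
  refine tendsto_nhds_top_mono hLtop ?_
  have hT : (0 : ℝ) < δ / (2 * δ') := by positivity
  filter_upwards [Ioo_mem_nhdsGT_of_mem (Set.mem_Ico.mpr ⟨le_refl (0 : ℝ), hT⟩)] with t ht
  obtain ⟨ht0, htT⟩ := ht
  have htd : t * δ' ≤ δ / 2 := by
    have := (lt_div_iff₀ (by positivity : (0 : ℝ) < 2 * δ')).mp htT
    nlinarith
  have htpow : (0 : ℝ) < t ^ (-α) := Real.rpow_pos_of_pos ht0 _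
  set a : ℝ := c * c' * t ^ (-α) with ha_def
  have ha : 0 < a := by positivity
  set A : ℝ → Set ℝ := fun ξ => Set.Icc (ξ - t * u₀ - t * δ') (ξ - t * u₀ + t * δ') with hA_def
  set S : Set ℝ := Set.Icc (η₀ + t * u₀ - δ / 2) (η₀ + t * u₀ + δ / 2) with hS_def
  set G : ℝ × ℝ → ℂ := fun z =>
    ψ z.2 * ((t ^ (-(1 / p'.toReal)) : ℝ) : ℂ) * φ (t⁻¹ * (z.1 - z.2)) with hG_def
  -- pointwise lower bound on the inner function
  have hpoint : ∀ ξ ∈ S, ∀ η, ‖(A ξ).indicator (fun _ => (a : ℂ)) η‖ ≤ ‖G (ξ, η)‖ := by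
    intro ξ hξ η
    by_cases hη : η ∈ A ξ
    · rw [Set.indicator_of_mem hη]
      obtain ⟨hη1, hη2⟩ := hη
      obtain ⟨hξ1, hξ2⟩ := hξ
      have hψη : c ≤ ‖ψ η‖ := by
        apply hψ
        rw [abs_le]
        constructor <;> nlinarith
      have hφv : c' ≤ ‖φ (t⁻¹ * (ξ - η))‖ := by
        apply hφ
        have hti : 0 < t⁻¹ := by positivity
        have h1 : ξ - η ≤ t * u₀ + t * δ' := by linarith
        have h2 : t * u₀ - t * δ' ≤ ξ - η := by linarith
        have e1 : t⁻¹ * (t * u₀ + t * δ') = u₀ + δ' := by field_simp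
        have e2 : t⁻¹ * (t * u₀ - t * δ') = u₀ - δ' := by field_simp
        rw [abs_le]
        constructor
        · nlinarith [mul_le_mul_of_nonneg_left h2 hti.le]
        · nlinarith [mul_le_mul_of_nonneg_left h1 hti.le]
      have hnorm : ‖G (ξ, η)‖ = ‖ψ η‖ * t ^ (-α) * ‖φ (t⁻¹ * (ξ - η))‖ := by
        rw [hG_def]
        simp only [norm_mul, Complex.norm_real, Real.norm_eq_abs]
        rw [abs_of_pos htpow]
      rw [hnorm, Complex.norm_real, Real.norm_eq_abs, abs_of_pos ha, ha_def]
      nlinarith [mul_nonneg (mul_nonneg (sub_nonneg.mpr hψη) hc'.le) htpow.le,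
        mul_nonneg (mul_nonneg (norm_nonneg (ψ η)) (sub_nonneg.mpr hφv)) htpow.le]
    · rw [Set.indicator_of_notMem hη]
      simpa using norm_nonneg (G (ξ, η))
  -- inner eLpNorm lower bound
  have hμA : ∀ ξ : ℝ, volume (A ξ) = ENNReal.ofReal (2 * (t * δ')) := by
    intro ξ
    rw [hA_def]
    rw [Real.volume_Icc]
    congr 1
    ring
  set b : ℝ≥0∞ := ENNReal.ofReal a * ENNReal.ofReal (2 * (t * δ')) ^ β with hb_def
  have hinner : ∀ ξ ∈ S, b ≤ eLpNorm (fun η => G (ξ, η)) s' volume := by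
    intro ξ hξ
    have h1 : eLpNorm ((A ξ).indicator (fun _ => (a : ℂ))) s' volume ≤
        eLpNorm (fun η => G (ξ, η)) s' volume :=
      eLpNorm_mono (hpoint ξ hξ)
    have h2 : eLpNorm ((A ξ).indicator (fun _ => (a : ℂ))) s' volume =
        ‖(a : ℂ)‖₊ * volume (A ξ) ^ (1 / s'.toReal) := by
      apply eLpNorm_indicator_const' measurableSet_Icc _ hs'ne0
      rw [hμA ξ, Ne, ENNReal.ofReal_eq_zero]
      push_neg
      positivity
    rw [h2, hμA ξ] at h1
    refine le_trans (le_of_eq ?_) h1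
    rw [hb_def]
    congr 1
    rw [← enorm_eq_nnnorm, ← ofReal_norm, Complex.norm_real, Real.norm_eq_abs, abs_of_pos ha]
  -- outer bound
  have houter : L t ≤ mixedNorm p' s' G := by
    have hSmeas : volume S = ENNReal.ofReal δ := by
      rw [hS_def, Real.volume_Icc]
      congr 1
      ring
    rw [mixedNorm, lpNormENN, if_neg hp'top]
    have hmono : ∀ ξ : ℝ, S.indicator (fun _ => b ^ p'.toReal) ξ ≤
        eLpNorm (fun η => G (ξ, η)) s' volume ^ p'.toReal := by
      intro ξ
      by_cases hξ : ξ ∈ S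
      · rw [Set.indicator_of_mem hξ]
        exact ENNReal.rpow_le_rpow (hinner ξ hξ) hpr.le
      · rw [Set.indicator_of_notMem hξ]
        exact zero_le
    have hint : b ^ p'.toReal * ENNReal.ofReal δ ≤
        ∫⁻ ξ, eLpNorm (fun η => G (ξ, η)) s' volume ^ p'.toReal := by
      calc b ^ p'.toReal * ENNReal.ofReal δ
          = ∫⁻ ξ, S.indicator (fun _ => b ^ p'.toReal) ξ := by
            rw [lintegral_indicator_const measurableSet_Icc, hSmeas]
        _ ≤ _ := lintegral_mono hmono
    have := ENNReal.rpow_le_rpow hint (by positivity : (0:ℝ) ≤ 1 / p'.toReal)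
    refine le_trans (le_of_eq ?_) this
    rw [ENNReal.mul_rpow_of_nonneg _ _ (by positivity : (0:ℝ) ≤ 1 / p'.toReal),
      ← ENNReal.rpow_mul, mul_one_div_cancel hpr.ne', ENNReal.rpow_one]
  exact houter
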